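/- arXiv:1103.0506 — 2 statements merged into one kernel-verified Lean document; each statement's English description precedes it below -/
import Mathlib

section
/- Under the same smoothness assumptions, let ψ̃₂ solve dψ̃₂/dt = Ψ(ψ̃₂, φ_{1/2}) on [t₀, t₀+Δt] with ψ̃₂(t₀) = ψ₀, where φ_{1/2} = φ(t₀ + Δt/2) is the exact field at the midpoint. Then ψ(t₀+Δt) − ψ̃₂(t₀+Δt) = O(Δt³) as Δt → 0, i.e. the midpoint-frozen-field scheme is second-order accurate. -/
set_option maxHeartbeats 1000000

open Set Real

/-- Second-order accuracy of the midpoint-frozen-field scheme: if `ψ` solves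
`dψ/dt = Ψ(ψ, Υ(ψ))` with `ψ(t₀) = ψ₀` and, for each step `Δt`, `ψ̃₂ Δt` solves
`dψ̃₂/dt = Ψ(ψ̃₂, φ_{1/2})` with `φ_{1/2} = Υ(ψ(t₀+Δt/2))` and `ψ̃₂ Δt t₀ = ψ₀`,
then `ψ(t₀+Δt) − ψ̃₂(t₀+Δt) = O(Δt³)` as `Δt → 0`. -/
theorem midpoint_frozen_field_second_order
    {n m : ℕ}
    (Ψ : (Fin n → ℝ) → (Fin m → ℝ) → (Fin n → ℝ))
    (Υ : (Fin n → ℝ) → (Fin m → ℝ))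
    (hΨ : ContDiff ℝ 3 (Function.uncurry Ψ))
    (hΥ : ContDiff ℝ 3 Υ)
    (ψ : ℝ → (Fin n → ℝ)) (ψt2 : ℝ → ℝ → (Fin n → ℝ))
    (t₀ : ℝ) (ψ₀ : Fin n → ℝ)
    (hψ : ∀ t, HasDerivAt ψ (Ψ (ψ t) (Υ (ψ t))) t)
    (hψ0 : ψ t₀ = ψ₀)
    (hψt2 : ∀ Δt t, HasDerivAt (ψt2 Δt) (Ψ (ψt2 Δt t) (Υ (ψ (t₀ + Δt / 2)))) t)
    (hψt20 : ∀ Δt, ψt2 Δt t₀ = ψ₀) :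
    ∃ C > 0, ∃ δ > 0, ∀ Δt ∈ Set.Ioo (0:ℝ) δ,
      ‖ψ (t₀ + Δt) - ψt2 Δt (t₀ + Δt)‖ ≤ C * Δt ^ 3 := by
  -- ## Smoothness infrastructure
  have hψdiff : Differentiable ℝ ψ := fun t => (hψ t).differentiableAt
  have hψcont : Continuous ψ := hψdiff.continuous
  have hFcd : ContDiff ℝ 3 (fun x => Ψ x (Υ x)) := hΨ.comp (contDiff_id.prodMk hΥ)
  have hderivψ : deriv ψ = fun t => Ψ (ψ t) (Υ (ψ t)) := funext fun t => (hψ t).deriv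
  have hψ1 : ContDiff ℝ 1 ψ := contDiff_one_iff_deriv.2 ⟨hψdiff, by
    rw [hderivψ]; exact hFcd.continuous.comp hψcont⟩
  have hψ2 : ContDiff ℝ 2 ψ := by
    rw [show (2 : WithTop ℕ∞) = 1 + 1 by norm_num, contDiff_succ_iff_deriv]
    refine ⟨hψdiff, by simp, ?_⟩
    rw [hderivψ]; exact (hFcd.of_le (by norm_num)).comp hψ1
  set h : ℝ → (Fin m → ℝ) := fun t => Υ (ψ t) with hh_def
  have hh2 : ContDiff ℝ 2 h := (hΥ.of_le (by norm_num)).comp hψ2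
  have hhdiff : Differentiable ℝ h := hh2.differentiable (by norm_num)
  have hh'1 : ContDiff ℝ 1 (deriv h) := by
    have := (contDiff_succ_iff_deriv (n := 1)).1 (by exact_mod_cast hh2)
    exact this.2.2
  set G := fderiv ℝ (Function.uncurry Ψ) with hG_def
  have hG2 : ContDiff ℝ 2 G := hΨ.fderiv_right (by norm_num)
  set p2 : ℝ × ℝ → (Fin n → ℝ) := fun z => G (ψ z.1, h z.2) (0, deriv h z.2) with hp2_def
  have hp2 : ContDiff ℝ 1 p2 :=
    ContDiff.clm_apply
      ((hG2.of_le (by norm_num)).comp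
        (((hψ2.of_le (by norm_num)).comp contDiff_fst).prodMk
          ((hh2.of_le (by norm_num)).comp contDiff_snd)))
      (contDiff_const.prodMk (hh'1.comp contDiff_snd))
  have hΥψ : ∀ (x : Fin n → ℝ) (σ : ℝ),
      HasDerivAt (fun s => Ψ x (h s)) (G (x, h σ) (0, deriv h σ)) σ := by
    intro x σ
    have h1 : HasDerivAt (fun s => (x, h s)) ((0 : Fin n → ℝ), deriv h σ) σ :=
      (hasDerivAt_const σ x).prodMk (hhdiff σ).hasDerivAt
    have h2 : HasFDerivAt (Function.uncurry Ψ) (G (x, h σ)) (x, h σ) :=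
      ((hΨ.differentiable (by norm_num)) _).hasFDerivAt
    exact h2.comp_hasDerivAt σ h1
  -- ## Compact sets and bounds
  set J : Set ℝ := Icc t₀ (t₀ + 1) with hJ_def
  have hJ : IsCompact J := isCompact_Icc
  set Kψ : Set (Fin n → ℝ) := ψ '' J with hKψ_def
  have hKψ : IsCompact Kψ := hJ.image hψcont
  set X : Set (Fin n → ℝ) := Metric.cthickening 1 Kψ with hX_def
  have hXc : IsCompact X := hKψ.cthickening
  have hKψX : Kψ ⊆ X := Metric.self_subset_cthickening Kψ
  set Kh : Set (Fin m → ℝ) := h '' J with hKh_def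
  have hKhc : IsCompact Kh := hJ.image hh2.continuous
  obtain ⟨L₀, hL₀⟩ := (hXc.prod hKhc).exists_bound_of_continuousOn hG2.continuous.continuousOn
  set L := max 1 L₀ with hL_def
  have hL1 : (1:ℝ) ≤ L := le_max_left _ _
  have hLbd : ∀ x ∈ X, ∀ c ∈ Kh, ‖G (x, c)‖ ≤ L := fun x hx c hc =>
    le_trans (hL₀ (x, c) (mk_mem_prod hx hc)) (le_max_right _ _)
  obtain ⟨M₀, hM₀⟩ := (hXc.prod hKhc).exists_bound_of_continuousOn hΨ.continuous.continuousOn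
  set M := max 1 M₀ with hM_def
  have hM1 : (1:ℝ) ≤ M := le_max_left _ _
  have hMbd : ∀ x ∈ X, ∀ c ∈ Kh, ‖Ψ x c‖ ≤ M := fun x hx c hc =>
    le_trans (hM₀ (x, c) (mk_mem_prod hx hc)) (le_max_right _ _)
  set Q : Set (ℝ × ℝ) := J ×ˢ J with hQ_def
  have hQc : IsCompact Q := hJ.prod hJ
  obtain ⟨Mp₀, hMp₀⟩ := hQc.exists_bound_of_continuousOn hp2.continuous.continuousOn
  set Mp := max 1 Mp₀ with hMp_def
  have hMp1 : (1:ℝ) ≤ Mp := le_max_left _ _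
  have hMpbd : ∀ z ∈ Q, ‖p2 z‖ ≤ Mp := fun z hz => le_trans (hMp₀ z hz) (le_max_right _ _)
  obtain ⟨Kp₀, hKp₀⟩ := hQc.exists_bound_of_continuousOn
    (hp2.continuous_fderiv one_ne_zero).continuousOn
  set Kp := max 1 Kp₀ with hKp_def
  have hKp1 : (1:ℝ) ≤ Kp := le_max_left _ _
  have hp2lip : ∀ z ∈ Q, ∀ w ∈ Q, ‖p2 z - p2 w‖ ≤ Kp * ‖z - w‖ := by
    intro z hz w hw
    refine ((convex_Icc _ _).prod (convex_Icc _ _)).norm_image_sub_le_of_norm_hasFDerivWithin_le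
      (f' := fun z => fderiv ℝ p2 z)
      (fun u _ => (hp2.differentiable one_ne_zero u).hasFDerivAt.hasFDerivWithinAt)
      (fun u hu => le_trans (hKp₀ u hu) (le_max_right _ _)) hw hz
  have hΨlip : ∀ c ∈ Kh, ∀ b ∈ Kψ, ∀ x ∈ Metric.closedBall b 1, ∀ y ∈ Metric.closedBall b 1,
      ‖Ψ x c - Ψ y c‖ ≤ L * ‖x - y‖ := by
    intro c hc b hb x hx y hy
    have hball : Metric.closedBall b 1 ⊆ X := Metric.closedBall_subset_cthickening hb 1
    refine (convex_closedBall b 1).norm_image_sub_le_of_norm_hasFDerivWithin_le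
      (f := fun x => Ψ x c)
      (f' := fun x => (G (x, c)).comp (ContinuousLinearMap.inl ℝ (Fin n → ℝ) (Fin m → ℝ)))
      (fun u _ => ?_) (fun u hu => ?_) hy hx
    · exact (((hΨ.differentiable (by norm_num)) _).hasFDerivAt.comp u
        (hasFDerivAt_prodMk_left u c)).hasFDerivWithinAt
    · refine ContinuousLinearMap.opNorm_le_bound _ (by linarith) fun v => ?_
      have h2 : ‖((v : Fin n → ℝ), (0 : Fin m → ℝ))‖ = ‖v‖ := by
        rw [Prod.norm_def]; simp [norm_nonneg]
      calc ‖((G (u, c)).comp (ContinuousLinearMap.inl ℝ (Fin n → ℝ) (Fin m → ℝ))) v‖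
          = ‖G (u, c) (v, 0)‖ := rfl
        _ ≤ ‖G (u, c)‖ * ‖((v : Fin n → ℝ), (0 : Fin m → ℝ))‖ :=
            ContinuousLinearMap.le_opNorm _ _
        _ = ‖G (u, c)‖ * ‖v‖ := by rw [h2]
        _ ≤ L * ‖v‖ := mul_le_mul_of_nonneg_right (hLbd u (hball hu) c hc) (norm_nonneg _)
  -- ## Choice of constants
  have hexpLpos : (0:ℝ) < Real.exp L := Real.exp_pos L
  have hLpos0 : (0:ℝ) < L := by linarith
  have hMpPos0 : (0:ℝ) < Mp := by linarith
  have hKpPos0 : (0:ℝ) < Kp := by linarith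
  have hprodpos : (0:ℝ) < L * (Mp * Real.exp L) := mul_pos hLpos0 (mul_pos hMpPos0 hexpLpos)
  refine ⟨Kp + L * (Mp * Real.exp L) + 1, by linarith, min 1 (1 / (2 * M + 1)),
    lt_min one_pos (div_pos one_pos (by linarith)), ?_⟩
  rintro Δt ⟨hΔt0, hΔtδ⟩
  have hΔt1 : Δt ≤ 1 := le_of_lt (lt_of_lt_of_le hΔtδ (min_le_left _ _))
  have hΔtM : 2 * M * Δt < 1 := by
    have h1 : Δt < 1 / (2 * M + 1) := lt_of_lt_of_le hΔtδ (min_le_right _ _)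
    have h2 : Δt * (2 * M + 1) < 1 := (lt_div_iff₀ (by linarith)).1 h1
    nlinarith
  set T := t₀ + Δt with hT_def
  set m' := t₀ + Δt / 2 with hm'_def
  have hsubJ : Icc t₀ T ⊆ J := Icc_subset_Icc le_rfl (by rw [hT_def]; linarith)
  have hψK : ∀ t ∈ Icc t₀ T, ψ t ∈ Kψ := fun t ht => ⟨t, hsubJ ht, rfl⟩
  have hhK : ∀ t ∈ Icc t₀ T, h t ∈ Kh := fun t ht => ⟨t, hsubJ ht, rfl⟩
  have hm'T : m' ∈ Icc t₀ T := ⟨by rw [hm'_def]; linarith, by rw [hm'_def, hT_def]; linarith⟩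
  set E : ℝ → (Fin n → ℝ) := fun t => ψ t - ψt2 Δt t with hE_def
  have hE0 : E t₀ = 0 := by simp [hE_def, hψ0, hψt20]
  have hψt2diff : Differentiable ℝ (ψt2 Δt) := fun t => (hψt2 Δt t).differentiableAt
  have hEcont : Continuous E := hψcont.sub hψt2diff.continuous
  set D : ℝ → (Fin n → ℝ) := fun t => Ψ (ψ t) (h t) - Ψ (ψt2 Δt t) (h m') with hD_def
  have hED : ∀ t, HasDerivAt E (D t) t := fun t => (hψ t).sub (hψt2 Δt t)
  -- ## Trapping: the numerical solution stays close
  have htrap : ∀ s ∈ Icc t₀ T, ‖E s‖ ≤ 2 * M * Δt := by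
    set S := {t ∈ Icc t₀ T | ∀ s ∈ Icc t₀ t, ‖E s‖ ≤ 1} with hS_def
    have hSne : t₀ ∈ S := ⟨left_mem_Icc.2 (by rw [hT_def]; linarith), fun s hs => by
      have hst : s = t₀ := le_antisymm hs.2 hs.1
      simp [hst, hE0]⟩
    have hSbdd : BddAbove S := ⟨T, fun t ht => ht.1.2⟩
    set c := sSup S with hc_def
    have htc : t₀ ≤ c := le_csSup hSbdd hSne
    have hcT : c ≤ T := csSup_le ⟨t₀, hSne⟩ fun t ht => ht.1.2
    have hlt1 : ∀ s ∈ Ico t₀ c, ‖E s‖ ≤ 1 := by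
      intro s hs
      obtain ⟨t, htS, hst⟩ := exists_lt_of_lt_csSup ⟨t₀, hSne⟩ hs.2
      exact htS.2 s ⟨hs.1, le_of_lt hst⟩
    have hIcc1 : ∀ s ∈ Icc t₀ c, ‖E s‖ ≤ 1 := by
      rcases eq_or_lt_of_le htc with heq | hlt'
      · intro s hs
        have hst : s = t₀ := le_antisymm (heq ▸ hs.2) hs.1
        simp [hst, hE0]
      · have hclosed : IsClosed {t : ℝ | ‖E t‖ ≤ 1} :=
          isClosed_le hEcont.norm continuous_const
        have h1 : Icc t₀ c ⊆ closure (Ico t₀ c) := by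
          rw [closure_Ico hlt'.ne]
        have h2 : closure (Ico t₀ c) ⊆ {t : ℝ | ‖E t‖ ≤ 1} :=
          closure_minimal (fun s hs => hlt1 s hs) hclosed
        exact fun s hs => h2 (h1 hs)
    have hDb : ∀ s ∈ Icc t₀ c, ‖D s‖ ≤ M + M := by
      intro s hs
      have hsT : s ∈ Icc t₀ T := ⟨hs.1, le_trans hs.2 hcT⟩
      have h1 : ‖Ψ (ψ s) (h s)‖ ≤ M := hMbd _ (hKψX (hψK s hsT)) _ (hhK s hsT)
      have h2 : ψt2 Δt s ∈ X := by
        apply Metric.closedBall_subset_cthickening (hψK s hsT) 1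
        rw [Metric.mem_closedBall, dist_eq_norm]
        have hneg : ψt2 Δt s - ψ s = -(E s) := by simp [hE_def]
        rw [hneg, norm_neg]; exact hIcc1 s hs
      have h3 : ‖Ψ (ψt2 Δt s) (h m')‖ ≤ M := hMbd _ h2 _ (hhK m' hm'T)
      calc ‖D s‖ ≤ ‖Ψ (ψ s) (h s)‖ + ‖Ψ (ψt2 Δt s) (h m')‖ := norm_sub_le _ _
        _ ≤ M + M := add_le_add h1 h3
    have hE2M : ∀ s ∈ Icc t₀ c, ‖E s‖ ≤ 2 * M * (s - t₀) := by
      intro s hs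
      have hmv := norm_image_sub_le_of_norm_deriv_le_segment'
        (f := E) (f' := D) (a := t₀) (b := c)
        (fun u _ => (hED u).hasDerivWithinAt)
        (fun u hu => hDb u (Ico_subset_Icc_self hu)) s hs
      rw [hE0, sub_zero] at hmv
      calc ‖E s‖ ≤ (M + M) * (s - t₀) := hmv
        _ = 2 * M * (s - t₀) := by ring
    have hceq : c = T := by
      by_contra hne
      have hcltT : c < T := lt_of_le_of_ne hcT hne
      have hEc : ‖E c‖ < 1 := by
        have h4 := hE2M c ⟨htc, le_rfl⟩
        have hcd : c - t₀ ≤ Δt := by rw [hT_def] at hcT; linarith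
        nlinarith
      obtain ⟨ε, hε0, hball⟩ := Metric.eventually_nhds_iff.1
        (hEcont.norm.continuousAt.eventually_lt continuousAt_const hEc)
      set c' := min T (c + ε / 2) with hc'_def
      have hcc' : c < c' := lt_min hcltT (by linarith)
      have hc'S : c' ∈ S := by
        refine ⟨⟨by linarith, min_le_left _ _⟩, fun s hs => ?_⟩
        rcases le_or_gt s c with hsc | hsc
        · exact hIcc1 s ⟨hs.1, hsc⟩
        · have hd : dist s c < ε := by
            rw [Real.dist_eq, abs_of_pos (by linarith)]
            have hsle : s ≤ c + ε / 2 := le_trans hs.2 (min_le_right _ _)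
            linarith
          exact le_of_lt (hball hd)
      have hle := le_csSup hSbdd hc'S
      rw [← hc_def] at hle
      linarith
    intro s hs
    rw [← hceq] at hs
    have h5 := hE2M s hs
    have h6 : s - t₀ ≤ Δt := by
      have := hs.2; rw [hceq, hT_def] at this; linarith
    nlinarith
  have htrap1 : ∀ s ∈ Icc t₀ T, ‖E s‖ ≤ 1 := fun s hs =>
    le_trans (htrap s hs) (le_of_lt hΔtM)
  -- ## pointwise bounds on the two parts of D
  have hB : ∀ t ∈ Icc t₀ T, ‖Ψ (ψ t) (h m') - Ψ (ψt2 Δt t) (h m')‖ ≤ L * ‖E t‖ := by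
    intro t ht
    have hy : ψt2 Δt t ∈ Metric.closedBall (ψ t) 1 := by
      rw [Metric.mem_closedBall, dist_eq_norm]
      have hneg : ψt2 Δt t - ψ t = -(E t) := by simp [hE_def]
      rw [hneg, norm_neg]; exact htrap1 t ht
    have := hΨlip (h m') (hhK m' hm'T) (ψ t) (hψK t ht) (ψ t)
      (Metric.mem_closedBall_self zero_le_one) (ψt2 Δt t) hy
    exact this
  have hFTC : ∀ t, Ψ (ψ t) (h t) - Ψ (ψ t) (h m') = ∫ σ in m'..t, p2 (t, σ) := by
    intro t
    have hInt : IntervalIntegrable (fun σ => p2 (t, σ)) MeasureTheory.volume m' t :=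
      (hp2.continuous.comp (Continuous.prodMk_right t)).intervalIntegrable _ _
    have := intervalIntegral.integral_eq_sub_of_hasDerivAt
      (f := fun s => Ψ (ψ t) (h s)) (f' := fun σ => p2 (t, σ))
      (fun σ _ => hΥψ (ψ t) σ) hInt
    exact this.symm
  have habs : ∀ t ∈ Icc t₀ T, |t - m'| ≤ Δt := by
    intro t ht
    have h1 := ht.1; have h2 := ht.2
    rw [hT_def] at h2
    rw [abs_le, hm'_def]; constructor <;> linarith
  have hIsub : ∀ t ∈ Icc t₀ T, uIoc m' t ⊆ Icc t₀ T := fun t ht =>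
    subset_trans uIoc_subset_uIcc (uIcc_subset_Icc hm'T ht)
  have hApt : ∀ t ∈ Icc t₀ T, ‖Ψ (ψ t) (h t) - Ψ (ψ t) (h m')‖ ≤ Mp * Δt := by
    intro t ht
    rw [hFTC t]
    refine le_trans (intervalIntegral.norm_integral_le_of_norm_le_const
      (C := Mp) fun σ hσ => ?_) ?_
    · exact hMpbd (t, σ) (mk_mem_prod (hsubJ ht) (hsubJ (hIsub t ht hσ)))
    · exact mul_le_mul_of_nonneg_left (habs t ht) (by linarith)
  -- ## Gronwall estimate
  have hgron : ∀ t ∈ Icc t₀ T, ‖E t‖ ≤ Mp * Real.exp L * Δt ^ 2 := by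
    have hbase := norm_le_gronwallBound_of_norm_deriv_right_le (f := E) (f' := D)
      (δ := 0) (K := L) (ε := Mp * Δt) (a := t₀) (b := T)
      hEcont.continuousOn (fun t _ => (hED t).hasDerivWithinAt)
      (by rw [hE0]; simp)
      (fun t ht => by
        have h1 := hApt t (Ico_subset_Icc_self ht)
        have h2 := hB t (Ico_subset_Icc_self ht)
        calc ‖D t‖ = ‖(Ψ (ψ t) (h t) - Ψ (ψ t) (h m')) +
              (Ψ (ψ t) (h m') - Ψ (ψt2 Δt t) (h m'))‖ := by rw [sub_add_sub_cancel]
          _ ≤ ‖Ψ (ψ t) (h t) - Ψ (ψ t) (h m')‖ +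
              ‖Ψ (ψ t) (h m') - Ψ (ψt2 Δt t) (h m')‖ := norm_add_le _ _
          _ ≤ Mp * Δt + L * ‖E t‖ := add_le_add h1 h2
          _ = L * ‖E t‖ + Mp * Δt := by ring)
    intro t ht
    have h3 := hbase t ht
    rw [gronwallBound_of_K_ne_0 (by linarith : L ≠ 0)] at h3
    have hx0 : 0 ≤ t - t₀ := by linarith [ht.1]
    have hx1 : t - t₀ ≤ Δt := by
      have := ht.2; rw [hT_def] at this; linarith
    have hLpos : (0:ℝ) < L := by linarith
    set A := Real.exp (L * (t - t₀)) with hA_def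
    have hApos : 0 < A := Real.exp_pos _
    have hkey : A - 1 ≤ L * (t - t₀) * A := by
      have h4 := Real.add_one_le_exp (-(L * (t - t₀)))
      have h5 : Real.exp (-(L * (t - t₀))) * A = 1 := by
        rw [hA_def, ← Real.exp_add]; simp
      nlinarith
    have hAle : A ≤ Real.exp L := by
      rw [hA_def]; apply Real.exp_le_exp.2; nlinarith
    have e1 : Mp * Δt / L * (A - 1) ≤ Mp * Δt / L * (L * (t - t₀) * A) := by
      apply mul_le_mul_of_nonneg_left hkey
      positivity
    have e2 : Mp * Δt / L * (L * (t - t₀) * A) = Mp * Δt * (t - t₀) * A := by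
      field_simp
    have e3 : Mp * Δt * (t - t₀) * A ≤ Mp * Real.exp L * Δt ^ 2 := by
      have e4 : (t - t₀) * A ≤ Δt * Real.exp L :=
        mul_le_mul hx1 hAle (le_of_lt hApos) (le_of_lt hΔt0)
      have e5 : Mp * Δt * ((t - t₀) * A) ≤ Mp * Δt * (Δt * Real.exp L) :=
        mul_le_mul_of_nonneg_left e4 (by positivity)
      nlinarith [e5]
    calc ‖E t‖ ≤ 0 * A + Mp * Δt / L * (A - 1) := h3
      _ = Mp * Δt / L * (A - 1) := by ring
      _ ≤ Mp * Δt / L * (L * (t - t₀) * A) := e1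
      _ = Mp * Δt * (t - t₀) * A := e2
      _ ≤ Mp * Real.exp L * Δt ^ 2 := e3
  -- ## Integral representation of the final error
  have hψΨcont : Continuous fun t => Ψ (ψ t) (h t) :=
    hΨ.continuous.comp (hψcont.prodMk hh2.continuous)
  have hψΨ'cont : Continuous fun t => Ψ (ψ t) (h m') :=
    hΨ.continuous.comp (hψcont.prodMk continuous_const)
  have hψt2Ψcont : Continuous fun t => Ψ (ψt2 Δt t) (h m') :=
    hΨ.continuous.comp (hψt2diff.continuous.prodMk continuous_const)
  have hDcont : Continuous D := hψΨcont.sub hψt2Ψcont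
  have hEeq : E T = ∫ t in t₀..T, D t := by
    have hint := intervalIntegral.integral_eq_sub_of_hasDerivAt
      (f := E) (f' := D) (a := t₀) (b := T) (fun t _ => hED t)
      (hDcont.intervalIntegrable _ _)
    rw [hint, hE0, sub_zero]
  set Af : ℝ → (Fin n → ℝ) := fun t => Ψ (ψ t) (h t) - Ψ (ψ t) (h m') with hAf_def
  set Bf : ℝ → (Fin n → ℝ) := fun t => Ψ (ψ t) (h m') - Ψ (ψt2 Δt t) (h m') with hBf_def
  have hAfcont : Continuous Af := hψΨcont.sub hψΨ'cont
  have hBfcont : Continuous Bf := hψΨ'cont.sub hψt2Ψcont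
  have hDsplit : D = fun t => Af t + Bf t := by
    funext t; rw [hAf_def, hBf_def]; simp [hD_def, sub_add_sub_cancel]
  have hT0 : t₀ ≤ T := by rw [hT_def]; linarith
  have hIoc : uIoc t₀ T ⊆ Icc t₀ T := by
    rw [uIoc_of_le hT0]; exact Ioc_subset_Icc_self
  -- the B part
  have hBint : ‖∫ t in t₀..T, Bf t‖ ≤ L * (Mp * Real.exp L * Δt ^ 2) * Δt := by
    refine le_trans (intervalIntegral.norm_integral_le_of_norm_le_const
      (C := L * (Mp * Real.exp L * Δt ^ 2)) fun t htI => ?_) ?_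
    · have ht : t ∈ Icc t₀ T := hIoc htI
      calc ‖Bf t‖ ≤ L * ‖E t‖ := hB t ht
        _ ≤ L * (Mp * Real.exp L * Δt ^ 2) :=
            mul_le_mul_of_nonneg_left (hgron t ht) (by linarith)
    · have : |T - t₀| = Δt := by rw [hT_def]; rw [add_sub_cancel_left, abs_of_pos hΔt0]
      rw [this]
  -- the A part: midpoint cancellation
  set v : Fin n → ℝ := p2 (m', m') with hv_def
  have hrest : ∀ t ∈ Icc t₀ T, ‖Af t - (t - m') • v‖ ≤ Kp * Δt * Δt := by
    intro t ht
    have hInt : IntervalIntegrable (fun σ => p2 (t, σ)) MeasureTheory.volume m' t :=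
      (hp2.continuous.comp (Continuous.prodMk_right t)).intervalIntegrable _ _
    have hint : (∫ σ in m'..t, (p2 (t, σ) - v)) = Af t - (t - m') • v := by
      rw [intervalIntegral.integral_sub hInt intervalIntegrable_const,
        intervalIntegral.integral_const, hAf_def]
      simp only [hFTC t]
    rw [← hint]
    refine le_trans (intervalIntegral.norm_integral_le_of_norm_le_const
      (C := Kp * Δt) fun σ hσ => ?_) ?_
    · have hσT : σ ∈ Icc t₀ T := hIsub t ht hσ
      refine le_trans (hp2lip (t, σ) (mk_mem_prod (hsubJ ht) (hsubJ hσT))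
        (m', m') (mk_mem_prod (hsubJ hm'T) (hsubJ hm'T))) ?_
      have hnorm : ‖((t, σ) : ℝ × ℝ) - (m', m')‖ = max |t - m'| |σ - m'| := by
        rw [Prod.mk_sub_mk, Prod.norm_def, Real.norm_eq_abs, Real.norm_eq_abs]
      rw [hnorm]
      refine mul_le_mul_of_nonneg_left ?_ (by linarith)
      exact max_le (habs t ht) (habs σ hσT)
    · exact mul_le_mul_of_nonneg_left (habs t ht) (by nlinarith)
  have hAint : ‖∫ t in t₀..T, Af t‖ ≤ Kp * Δt * Δt * Δt := by
    have hzero : (∫ t in t₀..T, (t - m')) = 0 := by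
      rw [intervalIntegral.integral_sub intervalIntegral.intervalIntegrable_id intervalIntegrable_const,
        integral_id, intervalIntegral.integral_const]
      rw [hT_def, hm'_def]; simp; ring
    have hsmulint : IntervalIntegrable (fun t => (t - m') • v) MeasureTheory.volume t₀ T :=
      (((continuous_id.sub continuous_const).smul continuous_const).intervalIntegrable _ _)
    have hrestint : IntervalIntegrable (fun t => Af t - (t - m') • v)
        MeasureTheory.volume t₀ T :=
      (hAfcont.sub ((continuous_id.sub continuous_const).smul continuous_const)).intervalIntegrable _ _
    have hlin : (∫ t in t₀..T, (t - m') • v) = 0 := by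
      rw [intervalIntegral.integral_smul_const, hzero, zero_smul]
    have hsplit : (∫ t in t₀..T, Af t)
        = (∫ t in t₀..T, (Af t - (t - m') • v)) + (∫ t in t₀..T, (t - m') • v) := by
      rw [← intervalIntegral.integral_add hrestint hsmulint]
      congr 1; funext t; abel
    rw [hsplit, hlin, add_zero]
    refine le_trans (intervalIntegral.norm_integral_le_of_norm_le_const
      (C := Kp * Δt * Δt) fun t htI => hrest t (hIoc htI)) ?_
    have habsT : |T - t₀| = Δt := by rw [hT_def, add_sub_cancel_left, abs_of_pos hΔt0]
    rw [habsT]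
  -- ## Conclusion
  have hfin : ‖E T‖ ≤ (Kp + L * (Mp * Real.exp L)) * Δt ^ 3 := by
    rw [hEeq, hDsplit]
    rw [intervalIntegral.integral_add (hAfcont.intervalIntegrable _ _)
      (hBfcont.intervalIntegrable _ _)]
    calc ‖(∫ t in t₀..T, Af t) + ∫ t in t₀..T, Bf t‖
        ≤ ‖∫ t in t₀..T, Af t‖ + ‖∫ t in t₀..T, Bf t‖ := norm_add_le _ _
      _ ≤ Kp * Δt * Δt * Δt + L * (Mp * Real.exp L * Δt ^ 2) * Δt :=
          add_le_add hAint hBint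
      _ = (Kp + L * (Mp * Real.exp L)) * Δt ^ 3 := by ring
  calc ‖ψ (t₀ + Δt) - ψt2 Δt (t₀ + Δt)‖ = ‖E T‖ := by rw [hE_def, hT_def]
    _ ≤ (Kp + L * (Mp * Real.exp L)) * Δt ^ 3 := hfin
    _ ≤ (Kp + L * (Mp * Real.exp L) + 1) * Δt ^ 3 := by nlinarith
end

section
/- Under the same smoothness assumptions, if φ_{1/2} in the midpoint-frozen-field scheme is replaced by φ̃_{1/2} = Υ(ψ̃₁(t₀+Δt/2)), where ψ̃₁ is the first-order frozen-field approximation at the half step, then the resulting approximation ψ̃₂ still satisfies ψ(t₀+Δt) − ψ̃₂(t₀+Δt) = O(Δt³). In particular, since ψ̃₁(t₀+Δt/2) − ψ(t₀+Δt/2) = O(Δt²) and Υ is Lipschitz, the O(Δt²) error in the midpoint field induces only an O(Δt³) error in ψ̃₂. -/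
open Set MeasureTheory intervalIntegral

section helpers
open Set

private lemma aux_lip {E F : Type*} [NormedAddCommGroup E] [NormedSpace ℝ E]
    [NormedAddCommGroup F] [NormedSpace ℝ F] {f : E → F} (hf : ContDiff ℝ 1 f)
    {s : Set E} (hconv : Convex ℝ s) (hcomp : IsCompact s) :
    ∃ K : ℝ, 0 ≤ K ∧ ∀ x ∈ s, ∀ y ∈ s, ‖f x - f y‖ ≤ K * ‖x - y‖ := by
  obtain ⟨K₀, hK₀⟩ := hcomp.exists_bound_of_continuousOn
    ((hf.continuous_fderiv one_ne_zero).continuousOn)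
  refine ⟨max K₀ 0, le_max_right _ _, fun x hx y hy => ?_⟩
  refine Convex.norm_image_sub_le_of_norm_fderiv_le
    (fun z _ => (hf.differentiable one_ne_zero z)) (fun z hz => le_trans (hK₀ z hz) (le_max_left _ _))
    hconv hy hx

private lemma aux_quad {E F : Type*} [NormedAddCommGroup E] [NormedSpace ℝ E]
    [NormedAddCommGroup F] [NormedSpace ℝ F] {f : E → F} (hf : ContDiff ℝ 2 f)
    {s : Set E} (hconv : Convex ℝ s) (hcomp : IsCompact s) :
    ∃ K : ℝ, 0 ≤ K ∧ ∀ x ∈ s, ∀ y ∈ s,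
      ‖f y - f x - fderiv ℝ f x (y - x)‖ ≤ K * ‖y - x‖ ^ 2 := by
  have hfd : ContDiff ℝ 1 (fderiv ℝ f) := hf.fderiv_right (le_refl _)
  obtain ⟨K, hK0, hK⟩ := aux_lip hfd hconv hcomp
  refine ⟨K, hK0, fun x hx y hy => ?_⟩
  have hseg : segment ℝ x y ⊆ s := hconv.segment_subset hx hy
  have key := Convex.norm_image_sub_le_of_norm_hasFDerivWithin_le'
    (f := f) (f' := fderiv ℝ f) (φ := fderiv ℝ f x) (C := K * ‖y - x‖) (s := segment ℝ x y)
    (fun z _ => (hf.differentiable two_ne_zero z).hasFDerivAt.hasFDerivWithinAt)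
    (fun z hz => ?_) (convex_segment x y) (left_mem_segment ℝ x y) (right_mem_segment ℝ x y)
  · calc ‖f y - f x - (fderiv ℝ f x) (y - x)‖ ≤ K * ‖y - x‖ * ‖y - x‖ := key
      _ = K * ‖y - x‖ ^ 2 := by ring
  · have h1 : ‖fderiv ℝ f z - fderiv ℝ f x‖ ≤ K * ‖z - x‖ := hK z (hseg hz) x hx
    have h2 : ‖z - x‖ ≤ ‖y - x‖ := by
      rw [segment_eq_image'] at hz
      obtain ⟨θ, hθ, rfl⟩ := hz
      simp only [add_sub_cancel_left, norm_smul, Real.norm_eq_abs,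
        abs_of_nonneg hθ.1]
      nlinarith [norm_nonneg (y - x), hθ.2]
    exact h1.trans (by nlinarith [norm_nonneg (y-x), norm_nonneg (z-x)])

private lemma aux_flow_contDiff {E : Type*} [NormedAddCommGroup E] [NormedSpace ℝ E]
    {F : E → E} {ψ : ℝ → E} (hF : ContDiff ℝ 2 F)
    (hψ : ∀ t, HasDerivAt ψ (F (ψ t)) t) : ContDiff ℝ 2 ψ := by
  have hdiff : Differentiable ℝ ψ := fun t => (hψ t).differentiableAt
  have hderiv : deriv ψ = F ∘ ψ := funext fun t => (hψ t).deriv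
  have hC1 : ContDiff ℝ 1 ψ := by
    rw [contDiff_one_iff_deriv]
    exact ⟨hdiff, by rw [hderiv]; exact hF.continuous.comp hdiff.continuous⟩
  rw [show (2 : WithTop ℕ∞) = 1 + 1 by norm_num, contDiff_succ_iff_deriv]
  refine ⟨hdiff, by simp, ?_⟩
  rw [hderiv]
  exact (hF.of_le one_le_two).comp hC1

private lemma aux_bootstrap {g : ℝ → ℝ} {a b r : ℝ} (hr : 0 < r)
    (hg : ContinuousOn g (Icc a b))
    (key : ∀ s ∈ Icc a b, (∀ τ ∈ Ico a s, g τ ≤ r) → g s ≤ r / 2) :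
    ∀ s ∈ Icc a b, g s ≤ r / 2 := by
  set A : Set ℝ := Icc a b ∩ g ⁻¹' (Ici r) with hA
  rcases A.eq_empty_or_nonempty with hAe | hAne
  · intro s hs
    refine key s hs fun τ hτ => ?_
    have hτ' : τ ∈ Icc a b := ⟨hτ.1, le_trans hτ.2.le hs.2⟩
    by_contra hc
    have : τ ∈ A := ⟨hτ', le_of_lt (not_le.mp hc)⟩
    rw [hAe] at this
    exact this
  · exfalso
    have hAclosed : IsClosed A := hg.preimage_isClosed_of_isClosed isClosed_Icc isClosed_Ici
    have hAbdd : BddBelow A := (bddBelow_Icc : BddBelow (Icc a b)).mono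
      (Set.inter_subset_left)
    have hmem : sInf A ∈ A := hAclosed.csInf_mem hAne hAbdd
    have h1 : sInf A ∈ Icc a b := hmem.1
    have h2 : r ≤ g (sInf A) := hmem.2
    have h3 : g (sInf A) ≤ r / 2 := by
      refine key _ h1 fun τ hτ => ?_
      have hnA : τ ∉ A := notMem_of_lt_csInf hτ.2 hAbdd
      have hτ' : τ ∈ Icc a b := ⟨hτ.1, le_trans hτ.2.le h1.2⟩
      by_contra hc
      exact hnA ⟨hτ', le_of_lt (not_le.mp hc)⟩
    linarith

end helpers

set_option maxHeartbeats 1000000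

/-- Second-order accuracy is preserved when the exact midpoint field `φ_{1/2}`
is replaced by the predicted field `φ̃_{1/2} = Υ(ψ̃₁(t₀+Δt/2))`, where `ψ̃₁` is
the first-order frozen-field approximation: the resulting `ψ̃₂` still satisfies
`ψ(t₀+Δt) − ψ̃₂(t₀+Δt) = O(Δt³)`. -/
theorem predicted_midpoint_field_second_order
    {n m : ℕ}
    (Ψ : (Fin n → ℝ) → (Fin m → ℝ) → (Fin n → ℝ))
    (Υ : (Fin n → ℝ) → (Fin m → ℝ))
    (hΨ : ContDiff ℝ 3 (Function.uncurry Ψ))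
    (hΥ : ContDiff ℝ 3 Υ)
    (L : ℝ) (hL : 0 ≤ L)
    (hΥLip : ∀ x y : Fin n → ℝ, ‖Υ x - Υ y‖ ≤ L * ‖x - y‖)
    (ψ ψt1 : ℝ → (Fin n → ℝ)) (ψt2 : ℝ → ℝ → (Fin n → ℝ))
    (t₀ : ℝ) (ψ₀ : Fin n → ℝ)
    (hψ : ∀ t, HasDerivAt ψ (Ψ (ψ t) (Υ (ψ t))) t)
    (hψ0 : ψ t₀ = ψ₀)
    (hψt1 : ∀ t, HasDerivAt ψt1 (Ψ (ψt1 t) (Υ ψ₀)) t)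
    (hψt10 : ψt1 t₀ = ψ₀)
    (hψt2 : ∀ Δt t,
      HasDerivAt (ψt2 Δt) (Ψ (ψt2 Δt t) (Υ (ψt1 (t₀ + Δt / 2)))) t)
    (hψt20 : ∀ Δt, ψt2 Δt t₀ = ψ₀) :
    ∃ C > 0, ∃ δ > 0, ∀ Δt ∈ Set.Ioo (0:ℝ) δ,
      ‖ψ (t₀ + Δt) - ψt2 Δt (t₀ + Δt)‖ ≤ C * Δt ^ 3 := by
  classical
  set f : (Fin n → ℝ) × (Fin m → ℝ) → (Fin n → ℝ) := Function.uncurry Ψ with hf_def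
  set φ₀ : Fin m → ℝ := Υ ψ₀ with hφ₀_def
  set D : Set ((Fin n → ℝ) × (Fin m → ℝ)) :=
    Metric.closedBall ψ₀ 1 ×ˢ Metric.closedBall φ₀ (L + 1) with hD_def
  have hDconv : Convex ℝ D := (convex_closedBall _ _).prod (convex_closedBall _ _)
  have hDcomp : IsCompact D := (isCompact_closedBall _ _).prod (isCompact_closedBall _ _)
  have hmemD : ∀ (x : Fin n → ℝ) (y : Fin m → ℝ),
      ‖x - ψ₀‖ ≤ 1 → ‖y - φ₀‖ ≤ L + 1 → (x, y) ∈ D := by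
    intro x y h1 h2
    refine ⟨?_, ?_⟩ <;> simp only [Metric.mem_closedBall, dist_eq_norm] <;> assumption
  have hz₀D : (ψ₀, φ₀) ∈ D := hmemD _ _ (by simp) (by simp; linarith)
  have hprod : ∀ (x : Fin n → ℝ) (y : Fin m → ℝ), ‖(x, y)‖ ≤ ‖x‖ + ‖y‖ := fun x y => by
    rw [Prod.norm_def]
    exact max_le (le_add_of_nonneg_right (norm_nonneg _)) (le_add_of_nonneg_left (norm_nonneg _))
  have hfcont : Continuous f := hΨ.continuous
  -- constants
  obtain ⟨M₀, hM₀⟩ := hDcomp.exists_bound_of_continuousOn hfcont.continuousOn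
  set M : ℝ := max M₀ 1 with hM_def
  have hM1 : (1:ℝ) ≤ M := le_max_right _ _
  have hM0 : (0:ℝ) < M := lt_of_lt_of_le one_pos hM1
  have hMf : ∀ z ∈ D, ‖f z‖ ≤ M := fun z hz => (hM₀ z hz).trans (le_max_left _ _)
  obtain ⟨K, hK0, hKf⟩ := aux_lip (f := f) (hΨ.of_le (by norm_num)) hDconv hDcomp
  obtain ⟨K₂, hK₂0, hK₂f⟩ := aux_quad (f := f) (hΨ.of_le (by norm_num)) hDconv hDcomp
  set A := fderiv ℝ f (ψ₀, φ₀) with hA_def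
  set Bmap : (Fin m → ℝ) →L[ℝ] (Fin n → ℝ) :=
    A.comp (ContinuousLinearMap.inr ℝ (Fin n → ℝ) (Fin m → ℝ)) with hBmap_def
  -- regularity of ψ and u
  have hFC2 : ContDiff ℝ 2 (fun x => Ψ x (Υ x)) :=
    (hΨ.of_le (by norm_num)).comp (contDiff_id.prodMk (hΥ.of_le (by norm_num)))
  have hψC2 : ContDiff ℝ 2 ψ := aux_flow_contDiff hFC2 hψ
  set u : ℝ → (Fin m → ℝ) := fun s => Υ (ψ s) with hu_def
  have huC2 : ContDiff ℝ 2 u := (hΥ.of_le (by norm_num)).comp hψC2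
  have hudiff : Differentiable ℝ u := huC2.differentiable two_ne_zero
  set udot := deriv u with hudot_def
  have hudC1 : ContDiff ℝ 1 udot := by
    have h2 : ContDiff ℝ ((1:WithTop ℕ∞) + 1) u := by
      rw [show ((1:WithTop ℕ∞) + 1) = 2 by norm_num]; exact huC2
    exact (contDiff_succ_iff_deriv.mp h2).2.2
  obtain ⟨Bu, hBu0, hBuf⟩ := aux_lip hudC1 (convex_Icc t₀ (t₀+1)) isCompact_Icc
  have hψcont : Continuous ψ := hψC2.continuous
  have hψ1cont : Continuous ψt1 :=
    continuous_iff_continuousAt.mpr fun t => (hψt1 t).continuousAt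
  have hucont : Continuous u := huC2.continuous
  -- the window where ψ and ψt1 stay in the unit ball
  obtain ⟨d1, hd1pos, hd1⟩ := Metric.continuousAt_iff.mp hψcont.continuousAt 1 one_pos
  obtain ⟨d2, hd2pos, hd2⟩ := Metric.continuousAt_iff.mp hψ1cont.continuousAt 1 one_pos
  set δ₁ : ℝ := min 1 (min (d1/2) (d2/2)) with hδ₁_def
  have hδ₁pos : 0 < δ₁ := lt_min one_pos (lt_min (by linarith) (by linarith))
  have hδ₁le1 : δ₁ ≤ 1 := min_le_left _ _
  have hψball : ∀ s ∈ Icc t₀ (t₀ + δ₁), ‖ψ s - ψ₀‖ ≤ 1 := by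
    intro s hs
    have hd : dist s t₀ < d1 := by
      rw [Real.dist_eq, abs_of_nonneg (by linarith [hs.1])]
      have h2 : s - t₀ ≤ δ₁ := by linarith [hs.2]
      have h3 : δ₁ ≤ d1/2 := le_trans (min_le_right _ _) (min_le_left _ _)
      linarith
    have := hd1 hd
    rw [dist_eq_norm, hψ0] at this
    exact this.le
  have hψ1ball : ∀ s ∈ Icc t₀ (t₀ + δ₁), ‖ψt1 s - ψ₀‖ ≤ 1 := by
    intro s hs
    have hd : dist s t₀ < d2 := by
      rw [Real.dist_eq, abs_of_nonneg (by linarith [hs.1])]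
      have h2 : s - t₀ ≤ δ₁ := by linarith [hs.2]
      have h3 : δ₁ ≤ d2/2 := le_trans (min_le_right _ _) (min_le_right _ _)
      linarith
    have := hd2 hd
    rw [dist_eq_norm, hψt10] at this
    exact this.le
  have huball : ∀ s ∈ Icc t₀ (t₀ + δ₁), ‖u s - φ₀‖ ≤ L := by
    intro s hs
    calc ‖u s - φ₀‖ ≤ L * ‖ψ s - ψ₀‖ := hΥLip _ _
      _ ≤ L * 1 := by
          exact mul_le_mul_of_nonneg_left (hψball s hs) hL
      _ = L := mul_one L
  have hmemψ : ∀ s ∈ Icc t₀ (t₀ + δ₁), (ψ s, u s) ∈ D := fun s hs =>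
    hmemD _ _ (hψball s hs) ((huball s hs).trans (by linarith))
  have hmemψ1 : ∀ s ∈ Icc t₀ (t₀ + δ₁), (ψt1 s, φ₀) ∈ D := fun s hs =>
    hmemD _ _ (hψ1ball s hs) (by simp; linarith)
  -- linear growth of ψ and ψt1
  have hψgrow : ∀ s ∈ Icc t₀ (t₀ + δ₁), ‖ψ s - ψ₀‖ ≤ M * (s - t₀) := by
    have h := norm_image_sub_le_of_norm_deriv_le_segment'
      (f := ψ) (f' := fun s => Ψ (ψ s) (u s)) (a := t₀) (b := t₀ + δ₁) (C := M)
      (fun s _ => (hψ s).hasDerivWithinAt)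
      (fun s hs => hMf _ (hmemψ s (Ico_subset_Icc_self hs)))
    intro s hs
    have h2 := h s hs
    rwa [hψ0] at h2
  have hψ1grow : ∀ s ∈ Icc t₀ (t₀ + δ₁), ‖ψt1 s - ψ₀‖ ≤ M * (s - t₀) := by
    have h := norm_image_sub_le_of_norm_deriv_le_segment'
      (f := ψt1) (f' := fun s => Ψ (ψt1 s) φ₀) (a := t₀) (b := t₀ + δ₁) (C := M)
      (fun s _ => (hψt1 s).hasDerivWithinAt)
      (fun s hs => hMf _ (hmemψ1 s (Ico_subset_Icc_self hs)))
    intro s hs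
    have h2 := h s hs
    rwa [hψt10] at h2
  have hugrow : ∀ s ∈ Icc t₀ (t₀ + δ₁), ‖u s - φ₀‖ ≤ L * (M * (s - t₀)) := by
    intro s hs
    calc ‖u s - φ₀‖ ≤ L * ‖ψ s - ψ₀‖ := hΥLip _ _
      _ ≤ L * (M * (s - t₀)) := mul_le_mul_of_nonneg_left (hψgrow s hs) hL
  -- the constant and the time step bound
  refine ⟨2*K₂*M^2*(1+L)^2 + ‖Bmap‖*(Bu/2 + L*(K*M*(2+L)/2)) + 2*K^2*M*(L+1) + 1, ?_,
    min δ₁ (1/(2*M)), lt_min hδ₁pos (div_pos one_pos (by linarith)), ?_⟩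
  · have h1 : (0:ℝ) ≤ 2*K₂*M^2*(1+L)^2 := by positivity
    have h2 : (0:ℝ) ≤ ‖Bmap‖*(Bu/2 + L*(K*M*(2+L)/2)) := by
      apply mul_nonneg (norm_nonneg _)
      have : (0:ℝ) ≤ L*(K*M*(2+L)/2) := by positivity
      linarith
    have h3 : (0:ℝ) ≤ 2*K^2*M*(L+1) := by positivity
    linarith
  intro Δt hΔt
  obtain ⟨hΔt0, hΔtδ⟩ := hΔt
  have hΔδ₁ : Δt ≤ δ₁ := le_of_lt (lt_of_lt_of_le hΔtδ (min_le_left _ _))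
  have hΔ1 : Δt ≤ 1 := hΔδ₁.trans hδ₁le1
  have hΔM : M * Δt ≤ 1/2 := by
    have h := lt_of_lt_of_le hΔtδ (min_le_right _ _)
    rw [lt_div_iff₀ (by linarith : (0:ℝ) < 2*M)] at h
    have h2 : M * Δt = Δt * (2*M) / 2 := by ring
    linarith
  set T : ℝ := t₀ + Δt with hT_def
  set mid : ℝ := t₀ + Δt / 2 with hmid_def
  have ht₀T : t₀ ≤ T := by simp [hT_def]; linarith
  have hsub : Icc t₀ T ⊆ Icc t₀ (t₀ + δ₁) := Icc_subset_Icc le_rfl (by simp [hT_def]; linarith)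
  have hsub1 : Icc t₀ T ⊆ Icc t₀ (t₀ + 1) := Icc_subset_Icc le_rfl (by simp [hT_def]; linarith)
  have hmidmem : mid ∈ Icc t₀ T := by
    constructor <;> simp [hmid_def, hT_def] <;> linarith
  set φt : Fin m → ℝ := Υ (ψt1 mid) with hφt_def
  have hφtb : ‖φt - φ₀‖ ≤ L * (M * (Δt/2)) := by
    have h1 : ‖φt - φ₀‖ ≤ L * ‖ψt1 mid - ψ₀‖ := hΥLip _ _
    have h2 : ‖ψt1 mid - ψ₀‖ ≤ M * (mid - t₀) := hψ1grow mid (hsub hmidmem)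
    have h3 : mid - t₀ = Δt/2 := by simp [hmid_def]
    rw [h3] at h2
    exact h1.trans (mul_le_mul_of_nonneg_left h2 hL)
  have hφtD : ‖φt - φ₀‖ ≤ L + 1 := by
    have h1 : ‖φt - φ₀‖ ≤ L * ‖ψt1 mid - ψ₀‖ := hΥLip _ _
    have h2 := hψ1ball mid (hsub hmidmem)
    have h3 : L * ‖ψt1 mid - ψ₀‖ ≤ L * 1 := mul_le_mul_of_nonneg_left h2 hL
    have h4 : L * 1 = L := mul_one L
    linarith
  -- first-order scheme error: crude bound
  have heA : ∀ s ∈ Icc t₀ T, ‖ψt1 s - ψ s‖ ≤ (2*M) * (s - t₀) := by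
    have h := norm_image_sub_le_of_norm_deriv_le_segment'
      (f := fun τ => ψt1 τ - ψ τ) (f' := fun τ => Ψ (ψt1 τ) φ₀ - Ψ (ψ τ) (u τ))
      (a := t₀) (b := T) (C := 2*M)
      (fun s _ => ((hψt1 s).sub (hψ s)).hasDerivWithinAt)
      (fun s hs => by
        have m1 := hMf _ (hmemψ1 s (hsub (Ico_subset_Icc_self hs)))
        have m2 := hMf _ (hmemψ s (hsub (Ico_subset_Icc_self hs)))
        calc ‖Ψ (ψt1 s) φ₀ - Ψ (ψ s) (u s)‖ ≤ ‖Ψ (ψt1 s) φ₀‖ + ‖Ψ (ψ s) (u s)‖ := norm_sub_le _ _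
          _ ≤ M + M := add_le_add m1 m2
          _ = 2*M := by ring)
    intro s hs
    have h2 := h s hs
    simpa only [hψt10, hψ0, sub_self, sub_zero] using h2
  -- first-order scheme error: refined bound
  have heB : ∀ s ∈ Icc t₀ T, ‖ψt1 s - ψ s‖ ≤ (K*M*(2+L)*Δt) * (s - t₀) := by
    have h := norm_image_sub_le_of_norm_deriv_le_segment'
      (f := fun τ => ψt1 τ - ψ τ) (f' := fun τ => Ψ (ψt1 τ) φ₀ - Ψ (ψ τ) (u τ))
      (a := t₀) (b := T) (C := K*M*(2+L)*Δt)
      (fun s _ => ((hψt1 s).sub (hψ s)).hasDerivWithinAt)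
      (fun s hs => by
        have hsIcc : s ∈ Icc t₀ T := Ico_subset_Icc_self hs
        have hlip := hKf _ (hmemψ1 s (hsub hsIcc)) _ (hmemψ s (hsub hsIcc))
        have hdiff : (ψt1 s, φ₀) - (ψ s, u s) = (ψt1 s - ψ s, φ₀ - u s) := rfl
        have hnorm : ‖(ψt1 s, φ₀) - (ψ s, u s)‖ ≤ ‖ψt1 s - ψ s‖ + ‖φ₀ - u s‖ := by
          rw [hdiff]; exact hprod _ _
        have h1 : ‖ψt1 s - ψ s‖ ≤ 2*M*(s - t₀) := heA s hsIcc
        have h2 : ‖φ₀ - u s‖ ≤ L * (M * (s - t₀)) := by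
          rw [norm_sub_rev]; exact hugrow s (hsub hsIcc)
        have hst : s - t₀ ≤ Δt := by
          have := hsIcc.2; simp [hT_def] at this; linarith
        have hst0 : 0 ≤ s - t₀ := by linarith [hsIcc.1]
        calc ‖Ψ (ψt1 s) φ₀ - Ψ (ψ s) (u s)‖
            = ‖f (ψt1 s, φ₀) - f (ψ s, u s)‖ := rfl
          _ ≤ K * ‖(ψt1 s, φ₀) - (ψ s, u s)‖ := hlip
          _ ≤ K * (2*M*(s-t₀) + L*(M*(s-t₀))) := by
              apply mul_le_mul_of_nonneg_left _ hK0
              exact hnorm.trans (add_le_add h1 h2)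
          _ = K*M*(2+L)*(s-t₀) := by ring
          _ ≤ K*M*(2+L)*Δt := by
              refine mul_le_mul_of_nonneg_left hst ?_
              have : (0:ℝ) ≤ 2 + L := by linarith
              exact mul_nonneg (mul_nonneg hK0 hM0.le) this)
    intro s hs
    have h2 := h s hs
    simpa only [hψt10, hψ0, sub_self, sub_zero] using h2
  have hemid : ‖ψt1 mid - ψ mid‖ ≤ K*M*(2+L)/2 * Δt^2 := by
    have h := heB mid hmidmem
    have h3 : mid - t₀ = Δt/2 := by simp [hmid_def]
    rw [h3] at h
    calc ‖ψt1 mid - ψ mid‖ ≤ K*M*(2+L)*Δt * (Δt/2) := h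
      _ = K*M*(2+L)/2 * Δt^2 := by ring
  -- bootstrap for ψt2
  have hψ2cont : Continuous (ψt2 Δt) :=
    continuous_iff_continuousAt.mpr fun t => (hψt2 Δt t).continuousAt
  have hboot : ∀ s ∈ Icc t₀ T, ‖ψt2 Δt s - ψ₀‖ ≤ 1/2 := by
    have key : ∀ s ∈ Icc t₀ T, (∀ τ ∈ Ico t₀ s, ‖ψt2 Δt τ - ψ₀‖ ≤ 1) →
        ‖ψt2 Δt s - ψ₀‖ ≤ 1/2 := by
      intro s hs hIco
      have hgrow := norm_image_sub_le_of_norm_deriv_le_segment'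
        (f := ψt2 Δt) (f' := fun τ => Ψ (ψt2 Δt τ) φt) (a := t₀) (b := s) (C := M)
        (fun τ _ => (hψt2 Δt τ).hasDerivWithinAt)
        (fun τ hτ => hMf _ (hmemD _ _ (hIco τ hτ) hφtD))
        s (by constructor <;> [exact hs.1; exact le_rfl])
      rw [hψt20] at hgrow
      have hst : s - t₀ ≤ Δt := by
        have := hs.2; simp [hT_def] at this; linarith
      calc ‖ψt2 Δt s - ψ₀‖ ≤ M * (s - t₀) := hgrow
        _ ≤ M * Δt := mul_le_mul_of_nonneg_left hst (le_of_lt hM0)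
        _ ≤ 1/2 := hΔM
    have := aux_bootstrap (g := fun s => ‖ψt2 Δt s - ψ₀‖) (a := t₀) (b := T) one_pos
      ((hψ2cont.sub continuous_const).norm.continuousOn) (by
        intro s hs h
        exact key s hs h)
    intro s hs
    have h := this s hs
    linarith
  have hmem2 : ∀ s ∈ Icc t₀ T, (ψt2 Δt s, φt) ∈ D := fun s hs =>
    hmemD _ _ ((hboot s hs).trans (by norm_num)) hφtD
  -- second-order scheme error: crude bound
  have hEA : ∀ s ∈ Icc t₀ T, ‖ψ s - ψt2 Δt s‖ ≤ (2*M) * (s - t₀) := by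
    have h := norm_image_sub_le_of_norm_deriv_le_segment'
      (f := fun τ => ψ τ - ψt2 Δt τ) (f' := fun τ => Ψ (ψ τ) (u τ) - Ψ (ψt2 Δt τ) φt)
      (a := t₀) (b := T) (C := 2*M)
      (fun s _ => ((hψ s).sub (hψt2 Δt s)).hasDerivWithinAt)
      (fun s hs => by
        have hsIcc : s ∈ Icc t₀ T := Ico_subset_Icc_self hs
        have m1 := hMf _ (hmemψ s (hsub hsIcc))
        have m2 := hMf _ (hmem2 s hsIcc)
        calc ‖Ψ (ψ s) (u s) - Ψ (ψt2 Δt s) φt‖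
            ≤ ‖Ψ (ψ s) (u s)‖ + ‖Ψ (ψt2 Δt s) φt‖ := norm_sub_le _ _
          _ ≤ M + M := add_le_add m1 m2
          _ = 2*M := by ring)
    intro s hs
    have h2 := h s hs
    simpa only [hψ0, hψt20, sub_self, sub_zero] using h2
  -- distance from u s to the predicted field
  have husφt : ∀ s ∈ Icc t₀ T, ‖u s - φt‖ ≤ 2*L*M*Δt := by
    intro s hs
    have h1 : ‖u s - φ₀‖ ≤ L * (M * (s - t₀)) := hugrow s (hsub hs)
    have hst : s - t₀ ≤ Δt := by
      have := hs.2; simp [hT_def] at this; linarith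
    have hst0 : 0 ≤ s - t₀ := by linarith [hs.1]
    have hLM : (0:ℝ) ≤ L*M := mul_nonneg hL hM0.le
    have b1 : L * (M * (s - t₀)) ≤ (L*M)*Δt := by
      have e : L * (M * (s - t₀)) = (L*M)*(s-t₀) := by ring
      rw [e]; exact mul_le_mul_of_nonneg_left hst hLM
    have b2 : L * (M * (Δt/2)) ≤ (L*M)*Δt := by
      have e : L * (M * (Δt/2)) = (L*M)*(Δt/2) := by ring
      rw [e]; exact mul_le_mul_of_nonneg_left (by linarith : Δt/2 ≤ Δt) hLM
    calc ‖u s - φt‖ ≤ ‖u s - φ₀‖ + ‖φ₀ - φt‖ := norm_sub_le_norm_sub_add_norm_sub _ _ _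
      _ ≤ L * (M * (s - t₀)) + L * (M * (Δt/2)) := by
          rw [norm_sub_rev (φ₀)]; exact add_le_add h1 hφtb
      _ ≤ (L*M)*Δt + (L*M)*Δt := add_le_add b1 b2
      _ = 2*L*M*Δt := by ring
  -- second-order scheme error: refined bound
  have hEB : ∀ s ∈ Icc t₀ T, ‖ψ s - ψt2 Δt s‖ ≤ (2*K*M*(L+1)*Δt) * (s - t₀) := by
    have h := norm_image_sub_le_of_norm_deriv_le_segment'
      (f := fun τ => ψ τ - ψt2 Δt τ) (f' := fun τ => Ψ (ψ τ) (u τ) - Ψ (ψt2 Δt τ) φt)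
      (a := t₀) (b := T) (C := 2*K*M*(L+1)*Δt)
      (fun s _ => ((hψ s).sub (hψt2 Δt s)).hasDerivWithinAt)
      (fun s hs => by
        have hsIcc : s ∈ Icc t₀ T := Ico_subset_Icc_self hs
        have hst : s - t₀ ≤ Δt := by
          have := hsIcc.2; simp [hT_def] at this; linarith
        have hst0 : 0 ≤ s - t₀ := by linarith [hsIcc.1]
        have hlip1 := hKf _ (hmemψ s (hsub hsIcc)) _ (hmemD (ψ s) φt (hψball s (hsub hsIcc)) hφtD)
        have hlip2 := hKf _ (hmemD (ψ s) φt (hψball s (hsub hsIcc)) hφtD) _ (hmem2 s hsIcc)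
        have hd1 : (ψ s, u s) - (ψ s, φt) = ((0 : Fin n → ℝ), u s - φt) := by
          ext <;> simp
        have hd2 : ((ψ s, φt) : (Fin n → ℝ) × (Fin m → ℝ)) - (ψt2 Δt s, φt)
            = (ψ s - ψt2 Δt s, (0 : Fin m → ℝ)) := by
          ext <;> simp
        have hn1 : ‖(ψ s, u s) - ((ψ s, φt) : (Fin n → ℝ) × (Fin m → ℝ))‖ ≤ ‖u s - φt‖ := by
          rw [hd1]
          calc _ ≤ ‖(0 : Fin n → ℝ)‖ + ‖u s - φt‖ := hprod _ _
            _ = ‖u s - φt‖ := by simp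
        have hn2 : ‖((ψ s, φt) : (Fin n → ℝ) × (Fin m → ℝ)) - (ψt2 Δt s, φt)‖
            ≤ ‖ψ s - ψt2 Δt s‖ := by
          rw [hd2]
          calc _ ≤ ‖ψ s - ψt2 Δt s‖ + ‖(0 : Fin m → ℝ)‖ := hprod _ _
            _ = ‖ψ s - ψt2 Δt s‖ := by simp
        have hu1 : ‖u s - φt‖ ≤ 2*L*M*Δt := husφt s hsIcc
        have hE1 : ‖ψ s - ψt2 Δt s‖ ≤ 2*M*(s - t₀) := hEA s hsIcc
        calc ‖Ψ (ψ s) (u s) - Ψ (ψt2 Δt s) φt‖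
            = ‖(f (ψ s, u s) - f (ψ s, φt)) + (f (ψ s, φt) - f (ψt2 Δt s, φt))‖ := by
              congr 1; abel
          _ ≤ ‖f (ψ s, u s) - f (ψ s, φt)‖ + ‖f (ψ s, φt) - f (ψt2 Δt s, φt)‖ := norm_add_le _ _
          _ ≤ K * ‖(ψ s, u s) - ((ψ s, φt) : (Fin n → ℝ) × (Fin m → ℝ))‖
              + K * ‖((ψ s, φt) : (Fin n → ℝ) × (Fin m → ℝ)) - (ψt2 Δt s, φt)‖ :=
              add_le_add hlip1 hlip2
          _ ≤ K * (2*L*M*Δt) + K * (2*M*(s - t₀)) := by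
              apply add_le_add <;> apply mul_le_mul_of_nonneg_left _ hK0
              · exact hn1.trans hu1
              · exact hn2.trans hE1
          _ ≤ K * (2*L*M*Δt) + (K*(2*M))*Δt := by
              refine add_le_add le_rfl ?_
              have e : K * (2*M*(s - t₀)) = (K*(2*M))*(s-t₀) := by ring
              rw [e]
              exact mul_le_mul_of_nonneg_left hst
                (mul_nonneg hK0 (by linarith))
          _ = 2*K*M*(L+1)*Δt := by ring)
    intro s hs
    have h2 := h s hs
    simpa only [hψ0, hψt20, sub_self, sub_zero] using h2
  -- continuity facts
  have hc1 : Continuous fun s => f (ψ s, u s) := hfcont.comp (hψcont.prodMk hucont)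
  have hc2 : Continuous fun s => f (ψ s, φt) := hfcont.comp (hψcont.prodMk continuous_const)
  have hc3 : Continuous fun s => f (ψt2 Δt s, φt) := hfcont.comp (hψ2cont.prodMk continuous_const)
  have hintE : IntervalIntegrable (fun s => Ψ (ψ s) (u s) - Ψ (ψt2 Δt s) φt) volume t₀ T :=
    (hc1.sub hc3).intervalIntegrable _ _
  have hFTC : (∫ s in t₀..T, (Ψ (ψ s) (u s) - Ψ (ψt2 Δt s) φt))
      = (ψ T - ψt2 Δt T) - (ψ t₀ - ψt2 Δt t₀) :=
    intervalIntegral.integral_eq_sub_of_hasDerivAt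
      (fun s _ => ((hψ s).sub (hψt2 Δt s))) hintE
  have hE0 : ψ t₀ - ψt2 Δt t₀ = 0 := by rw [hψ0, hψt20]; exact sub_self _
  have hgoalE : ψ T - ψt2 Δt T = ∫ s in t₀..T, (Ψ (ψ s) (u s) - Ψ (ψt2 Δt s) φt) := by
    rw [hFTC, hE0, sub_zero]
  -- integrability of the pieces
  have hIq1 : IntervalIntegrable
      (fun s => f (ψ s, u s) - f (ψ₀, φ₀) - A ((ψ s, u s) - (ψ₀, φ₀))) volume t₀ T :=
    ((hc1.sub continuous_const).sub
      (A.continuous.comp ((hψcont.prodMk hucont).sub continuous_const))).intervalIntegrable _ _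
  have hIq2 : IntervalIntegrable
      (fun s => f (ψ s, φt) - f (ψ₀, φ₀) - A ((ψ s, φt) - (ψ₀, φ₀))) volume t₀ T :=
    ((hc2.sub continuous_const).sub
      (A.continuous.comp ((hψcont.prodMk continuous_const).sub
        continuous_const))).intervalIntegrable _ _
  have hIR : IntervalIntegrable (fun s => f (ψ s, φt) - f (ψt2 Δt s, φt)) volume t₀ T :=
    (hc2.sub hc3).intervalIntegrable _ _
  have hIQ : IntervalIntegrable (fun s => Bmap (u s - φt)) volume t₀ T :=
    (Bmap.continuous.comp (hucont.sub continuous_const)).intervalIntegrable _ _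
  have hIuφ : IntervalIntegrable (fun s => u s - φt) volume t₀ T :=
    (hucont.sub continuous_const).intervalIntegrable _ _
  -- the splitting identity
  have hsplit : (fun s => Ψ (ψ s) (u s) - Ψ (ψt2 Δt s) φt)
      = fun s => ((f (ψ s, u s) - f (ψ₀, φ₀) - A ((ψ s, u s) - (ψ₀, φ₀)))
          - (f (ψ s, φt) - f (ψ₀, φ₀) - A ((ψ s, φt) - (ψ₀, φ₀))))
          + Bmap (u s - φt) + (f (ψ s, φt) - f (ψt2 Δt s, φt)) := by
    funext s
    have hQA : Bmap (u s - φt) = A ((ψ s, u s) - (ψ₀, φ₀)) - A ((ψ s, φt) - (ψ₀, φ₀)) := by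
      rw [← A.map_sub]
      have e : ((ψ s, u s) - (ψ₀, φ₀)) - ((ψ s, φt) - (ψ₀, φ₀))
          = ((0 : Fin n → ℝ), u s - φt) := by
        ext <;> simp
      rw [e]
      rfl
    show f (ψ s, u s) - f (ψt2 Δt s, φt) = _
    rw [hQA]; abel
  have hIsplit : (∫ s in t₀..T, (Ψ (ψ s) (u s) - Ψ (ψt2 Δt s) φt))
      = (∫ s in t₀..T, ((f (ψ s, u s) - f (ψ₀, φ₀) - A ((ψ s, u s) - (ψ₀, φ₀)))
            - (f (ψ s, φt) - f (ψ₀, φ₀) - A ((ψ s, φt) - (ψ₀, φ₀)))))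
        + (∫ s in t₀..T, Bmap (u s - φt))
        + (∫ s in t₀..T, (f (ψ s, φt) - f (ψt2 Δt s, φt))) := by
    rw [hsplit, intervalIntegral.integral_add ((hIq1.sub hIq2).add hIQ) hIR,
        intervalIntegral.integral_add (hIq1.sub hIq2) hIQ]
  -- the Q integral via linearity
  have hQint : (∫ s in t₀..T, Bmap (u s - φt)) = Bmap (∫ s in t₀..T, (u s - φt)) :=
    Bmap.intervalIntegral_comp_comm hIuφ
  -- midpoint decomposition of the u-integral
  have hwsplit : (fun s => u s - φt)
      = fun s => (u s - u mid - (s - mid) • udot mid) + (s - mid) • udot mid + (u mid - φt) := by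
    funext s; abel
  have hIw1 : IntervalIntegrable (fun s => u s - u mid - (s - mid) • udot mid) volume t₀ T :=
    ((hucont.sub continuous_const).sub
      ((continuous_id.sub continuous_const).smul continuous_const)).intervalIntegrable _ _
  have hIw2 : IntervalIntegrable (fun s => (s - mid) • udot mid) volume t₀ T :=
    ((continuous_id.sub continuous_const).smul continuous_const).intervalIntegrable _ _
  have hIw3 : IntervalIntegrable (fun s => u mid - φt) volume t₀ T :=
    intervalIntegrable_const
  have hw2 : (∫ s in t₀..T, (s - mid) • udot mid) = 0 := by
    rw [intervalIntegral.integral_smul_const]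
    have hz : (∫ s in t₀..T, (s - mid)) = 0 := by
      have hshift : (∫ s in t₀..T, (s - mid)) = ∫ s in (t₀ - mid)..(T - mid), s :=
        intervalIntegral.integral_comp_sub_right (fun x => x) mid
      rw [hshift, integral_id, hT_def, hmid_def]
      ring
    rw [hz, zero_smul]
  -- Lipschitz bound for udot near mid
  have hBuΔ : ∀ τ ∈ Icc t₀ T, ‖udot τ - udot mid‖ ≤ Bu * Δt := by
    intro τ hτ
    have h1 := hBuf τ (hsub1 hτ) mid (hsub1 hmidmem)
    have h2 : ‖τ - mid‖ ≤ Δt := by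
      rw [Real.norm_eq_abs, abs_le]
      have ha := hτ.1
      have hb := hτ.2
      rw [hT_def] at hb
      constructor <;> rw [hmid_def] at * <;> [linarith; linarith]
    exact h1.trans (mul_le_mul_of_nonneg_left h2 hBu0)
  -- second-order Taylor bound for u at mid
  have htaylor : ∀ s ∈ Icc t₀ T,
      ‖u s - u mid - (s - mid) • udot mid‖ ≤ (Bu * Δt) * (Δt/2) := by
    intro s hs
    have hder : ∀ τ ∈ Icc t₀ T, HasDerivWithinAt (fun τ => u τ - (τ - mid) • udot mid)
        (udot τ - udot mid) (Icc t₀ T) τ := by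
      intro τ _
      have h1 : HasDerivAt u (udot τ) τ := (hudiff τ).hasDerivAt
      have h2 : HasDerivAt (fun τ => (τ - mid) • udot mid) (udot mid) τ := by
        simpa using (((hasDerivAt_id τ).sub_const mid).smul_const (udot mid))
      exact (h1.sub h2).hasDerivWithinAt
    have key := Convex.norm_image_sub_le_of_norm_hasDerivWithin_le hder
      (fun τ hτ => hBuΔ τ hτ) (convex_Icc _ _) hmidmem hs
    simp only [sub_self, zero_smul, sub_zero] at key
    have e : u s - (s - mid) • udot mid - u mid = u s - u mid - (s - mid) • udot mid := by abel
    rw [e] at key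
    have h3 : ‖s - mid‖ ≤ Δt/2 := by
      rw [Real.norm_eq_abs, abs_le]
      have ha := hs.1
      have hb := hs.2
      rw [hT_def] at hb
      constructor <;> rw [hmid_def] at * <;> [linarith; linarith]
    exact key.trans (mul_le_mul_of_nonneg_left h3 (mul_nonneg hBu0 hΔt0.le))
  have habsT : |T - t₀| = Δt := by
    rw [hT_def, add_sub_cancel_left, abs_of_nonneg hΔt0.le]
  have hmemIoc : ∀ x ∈ Set.uIoc t₀ T, x ∈ Icc t₀ T := by
    intro x hx
    rw [Set.uIoc_of_le ht₀T] at hx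
    exact Ioc_subset_Icc_self hx
  have hw1bound : ‖∫ s in t₀..T, (u s - u mid - (s - mid) • udot mid)‖
      ≤ (Bu * Δt * (Δt/2)) * Δt := by
    have h := intervalIntegral.norm_integral_le_of_norm_le_const
      (C := Bu * Δt * (Δt/2)) (f := fun s => u s - u mid - (s - mid) • udot mid)
      (a := t₀) (b := T) (fun x hx => htaylor x (hmemIoc x hx))
    rwa [habsT] at h
  have hw3 : (∫ s in t₀..T, (u mid - φt)) = Δt • (u mid - φt) := by
    rw [intervalIntegral.integral_const]
    congr 1
    rw [hT_def]; ring
  have humidφt : ‖u mid - φt‖ ≤ L * (K*M*(2+L)/2 * Δt^2) := by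
    have h0 : ‖Υ (ψ mid) - Υ (ψt1 mid)‖ ≤ L * ‖ψ mid - ψt1 mid‖ := hΥLip _ _
    have h1 : ‖u mid - φt‖ ≤ L * ‖ψ mid - ψt1 mid‖ := h0
    refine h1.trans (mul_le_mul_of_nonneg_left ?_ hL)
    rw [norm_sub_rev]
    exact hemid
  have hwsum : (∫ s in t₀..T, (u s - φt))
      = (∫ s in t₀..T, (u s - u mid - (s - mid) • udot mid))
        + (∫ s in t₀..T, (s - mid) • udot mid) + (∫ s in t₀..T, (u mid - φt)) := by
    rw [hwsplit, intervalIntegral.integral_add (hIw1.add hIw2) hIw3,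
        intervalIntegral.integral_add hIw1 hIw2]
  have hwbound : ‖∫ s in t₀..T, (u s - φt)‖ ≤ (Bu/2 + L*(K*M*(2+L)/2)) * Δt^3 := by
    rw [hwsum, hw2, add_zero]
    calc ‖(∫ s in t₀..T, (u s - u mid - (s - mid) • udot mid))
          + (∫ s in t₀..T, (u mid - φt))‖
        ≤ ‖∫ s in t₀..T, (u s - u mid - (s - mid) • udot mid)‖
          + ‖∫ s in t₀..T, (u mid - φt)‖ := norm_add_le _ _
      _ ≤ (Bu * Δt * (Δt/2)) * Δt + Δt * (L * (K*M*(2+L)/2 * Δt^2)) := by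
          refine add_le_add hw1bound ?_
          rw [hw3, norm_smul, Real.norm_eq_abs, abs_of_nonneg hΔt0.le]
          exact mul_le_mul_of_nonneg_left humidφt hΔt0.le
      _ = (Bu/2 + L*(K*M*(2+L)/2)) * Δt^3 := by ring
  have hQbound : ‖∫ s in t₀..T, Bmap (u s - φt)‖
      ≤ ‖Bmap‖ * ((Bu/2 + L*(K*M*(2+L)/2)) * Δt^3) := by
    rw [hQint]
    exact (Bmap.le_opNorm _).trans (mul_le_mul_of_nonneg_left hwbound (norm_nonneg _))
  -- quadratic bounds
  have hq1b : ∀ s ∈ Icc t₀ T, ‖f (ψ s, u s) - f (ψ₀, φ₀) - A ((ψ s, u s) - (ψ₀, φ₀))‖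
      ≤ K₂ * (M*(1+L)*Δt)^2 := by
    intro s hs
    have h := hK₂f (ψ₀, φ₀) hz₀D (ψ s, u s) (hmemψ s (hsub hs))
    have hst : s - t₀ ≤ Δt := by
      have := hs.2; rw [hT_def] at this; linarith
    have hn : ‖(ψ s, u s) - ((ψ₀, φ₀) : (Fin n → ℝ) × (Fin m → ℝ))‖ ≤ M*(1+L)*Δt := by
      have e : (ψ s, u s) - ((ψ₀, φ₀) : (Fin n → ℝ) × (Fin m → ℝ))
          = (ψ s - ψ₀, u s - φ₀) := rfl
      rw [e]
      calc ‖(ψ s - ψ₀, u s - φ₀)‖ ≤ ‖ψ s - ψ₀‖ + ‖u s - φ₀‖ := hprod _ _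
        _ ≤ M*(s-t₀) + L*(M*(s-t₀)) := add_le_add (hψgrow s (hsub hs)) (hugrow s (hsub hs))
        _ = M*(1+L)*(s-t₀) := by ring
        _ ≤ M*(1+L)*Δt := mul_le_mul_of_nonneg_left hst
            (mul_nonneg hM0.le (by linarith))
    calc ‖f (ψ s, u s) - f (ψ₀, φ₀) - A ((ψ s, u s) - (ψ₀, φ₀))‖
        ≤ K₂ * ‖(ψ s, u s) - ((ψ₀, φ₀) : (Fin n → ℝ) × (Fin m → ℝ))‖^2 := h
      _ ≤ K₂ * (M*(1+L)*Δt)^2 := mul_le_mul_of_nonneg_left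
          (pow_le_pow_left₀ (norm_nonneg _) hn 2) hK₂0
  have hq2b : ∀ s ∈ Icc t₀ T, ‖f (ψ s, φt) - f (ψ₀, φ₀) - A ((ψ s, φt) - (ψ₀, φ₀))‖
      ≤ K₂ * (M*(1+L)*Δt)^2 := by
    intro s hs
    have h := hK₂f (ψ₀, φ₀) hz₀D (ψ s, φt) (hmemD (ψ s) φt (hψball s (hsub hs)) hφtD)
    have hst : s - t₀ ≤ Δt := by
      have := hs.2; rw [hT_def] at this; linarith
    have hn : ‖(ψ s, φt) - ((ψ₀, φ₀) : (Fin n → ℝ) × (Fin m → ℝ))‖ ≤ M*(1+L)*Δt := by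
      have e : (ψ s, φt) - ((ψ₀, φ₀) : (Fin n → ℝ) × (Fin m → ℝ))
          = (ψ s - ψ₀, φt - φ₀) := rfl
      rw [e]
      calc ‖(ψ s - ψ₀, φt - φ₀)‖ ≤ ‖ψ s - ψ₀‖ + ‖φt - φ₀‖ := hprod _ _
        _ ≤ M*(s-t₀) + L*(M*(Δt/2)) := add_le_add (hψgrow s (hsub hs)) hφtb
        _ ≤ M*Δt + L*(M*Δt) := add_le_add
            (mul_le_mul_of_nonneg_left hst hM0.le)
            (mul_le_mul_of_nonneg_left
              (mul_le_mul_of_nonneg_left (by linarith : Δt/2 ≤ Δt) hM0.le) hL)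
        _ = M*(1+L)*Δt := by ring
    calc ‖f (ψ s, φt) - f (ψ₀, φ₀) - A ((ψ s, φt) - (ψ₀, φ₀))‖
        ≤ K₂ * ‖(ψ s, φt) - ((ψ₀, φ₀) : (Fin n → ℝ) × (Fin m → ℝ))‖^2 := h
      _ ≤ K₂ * (M*(1+L)*Δt)^2 := mul_le_mul_of_nonneg_left
          (pow_le_pow_left₀ (norm_nonneg _) hn 2) hK₂0
  have hq12bound : ‖∫ s in t₀..T, ((f (ψ s, u s) - f (ψ₀, φ₀) - A ((ψ s, u s) - (ψ₀, φ₀)))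
        - (f (ψ s, φt) - f (ψ₀, φ₀) - A ((ψ s, φt) - (ψ₀, φ₀))))‖
      ≤ (2 * (K₂ * (M*(1+L)*Δt)^2)) * Δt := by
    have h := intervalIntegral.norm_integral_le_of_norm_le_const
      (C := 2 * (K₂ * (M*(1+L)*Δt)^2))
      (f := fun s => (f (ψ s, u s) - f (ψ₀, φ₀) - A ((ψ s, u s) - (ψ₀, φ₀)))
        - (f (ψ s, φt) - f (ψ₀, φ₀) - A ((ψ s, φt) - (ψ₀, φ₀))))
      (a := t₀) (b := T) (fun x hx => by
        have hxI := hmemIoc x hx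
        calc ‖(f (ψ x, u x) - f (ψ₀, φ₀) - A ((ψ x, u x) - (ψ₀, φ₀)))
              - (f (ψ x, φt) - f (ψ₀, φ₀) - A ((ψ x, φt) - (ψ₀, φ₀)))‖
            ≤ ‖f (ψ x, u x) - f (ψ₀, φ₀) - A ((ψ x, u x) - (ψ₀, φ₀))‖
              + ‖f (ψ x, φt) - f (ψ₀, φ₀) - A ((ψ x, φt) - (ψ₀, φ₀))‖ := norm_sub_le _ _
          _ ≤ K₂ * (M*(1+L)*Δt)^2 + K₂ * (M*(1+L)*Δt)^2 :=
              add_le_add (hq1b x hxI) (hq2b x hxI)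
          _ = 2 * (K₂ * (M*(1+L)*Δt)^2) := by ring)
    rwa [habsT] at h
  have hRbound : ‖∫ s in t₀..T, (f (ψ s, φt) - f (ψt2 Δt s, φt))‖
      ≤ ((2*K^2*M*(L+1)) * Δt^2) * Δt := by
    have h := intervalIntegral.norm_integral_le_of_norm_le_const
      (C := (2*K^2*M*(L+1)) * Δt^2)
      (f := fun s => f (ψ s, φt) - f (ψt2 Δt s, φt))
      (a := t₀) (b := T) (fun x hx => by
        have hxI := hmemIoc x hx
        have hlip := hKf _ (hmemD (ψ x) φt (hψball x (hsub hxI)) hφtD) _ (hmem2 x hxI)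
        have hd : ((ψ x, φt) : (Fin n → ℝ) × (Fin m → ℝ)) - (ψt2 Δt x, φt)
            = (ψ x - ψt2 Δt x, (0 : Fin m → ℝ)) := by
          ext <;> simp
        have hn : ‖((ψ x, φt) : (Fin n → ℝ) × (Fin m → ℝ)) - (ψt2 Δt x, φt)‖
            ≤ ‖ψ x - ψt2 Δt x‖ := by
          rw [hd]
          calc ‖(ψ x - ψt2 Δt x, (0 : Fin m → ℝ))‖
              ≤ ‖ψ x - ψt2 Δt x‖ + ‖(0 : Fin m → ℝ)‖ := hprod _ _
            _ = ‖ψ x - ψt2 Δt x‖ := by simp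
        have hE := hEB x hxI
        have hst : x - t₀ ≤ Δt := by
          have := hxI.2; rw [hT_def] at this; linarith
        calc ‖f (ψ x, φt) - f (ψt2 Δt x, φt)‖
            ≤ K * ‖((ψ x, φt) : (Fin n → ℝ) × (Fin m → ℝ)) - (ψt2 Δt x, φt)‖ := hlip
          _ ≤ K * ((2*K*M*(L+1)*Δt) * Δt) := by
              refine mul_le_mul_of_nonneg_left (hn.trans (hE.trans ?_)) hK0
              refine mul_le_mul_of_nonneg_left hst ?_
              exact mul_nonneg (mul_nonneg (mul_nonneg
                (by linarith : (0:ℝ) ≤ 2*K) hM0.le) (by linarith)) hΔt0.le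
          _ = (2*K^2*M*(L+1)) * Δt^2 := by ring)
    rwa [habsT] at h
  -- final assembly
  calc ‖ψ T - ψt2 Δt T‖
      = ‖(∫ s in t₀..T, ((f (ψ s, u s) - f (ψ₀, φ₀) - A ((ψ s, u s) - (ψ₀, φ₀)))
            - (f (ψ s, φt) - f (ψ₀, φ₀) - A ((ψ s, φt) - (ψ₀, φ₀)))))
        + (∫ s in t₀..T, Bmap (u s - φt))
        + (∫ s in t₀..T, (f (ψ s, φt) - f (ψt2 Δt s, φt)))‖ := by
        rw [hgoalE, hIsplit]
    _ ≤ ‖(∫ s in t₀..T, ((f (ψ s, u s) - f (ψ₀, φ₀) - A ((ψ s, u s) - (ψ₀, φ₀)))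
            - (f (ψ s, φt) - f (ψ₀, φ₀) - A ((ψ s, φt) - (ψ₀, φ₀)))))‖
        + ‖∫ s in t₀..T, Bmap (u s - φt)‖
        + ‖∫ s in t₀..T, (f (ψ s, φt) - f (ψt2 Δt s, φt))‖ := norm_add₃_le
    _ ≤ (2 * (K₂ * (M*(1+L)*Δt)^2)) * Δt
        + ‖Bmap‖ * ((Bu/2 + L*(K*M*(2+L)/2)) * Δt^3)
        + ((2*K^2*M*(L+1)) * Δt^2) * Δt :=
        add_le_add (add_le_add hq12bound hQbound) hRbound
    _ = (2*K₂*M^2*(1+L)^2 + ‖Bmap‖*(Bu/2 + L*(K*M*(2+L)/2)) + 2*K^2*M*(L+1)) * Δt^3 := by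
        ring
    _ ≤ (2*K₂*M^2*(1+L)^2 + ‖Bmap‖*(Bu/2 + L*(K*M*(2+L)/2)) + 2*K^2*M*(L+1) + 1) * Δt^3 := by
        have h3 : (0:ℝ) ≤ Δt^3 := by positivity
        exact mul_le_mul_of_nonneg_right (by linarith) h3
end
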